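/- Overshoot bound under the memoryless-type assumption: Let (𝓔ᵢ) be i.i.d. nonnegative integrable random variables bounded by C_t, with E[𝓔₀] > 0, satisfying E[𝓔₀ | 𝓔₀ ≥ γ] ≤ γ + E[𝓔₀] for all γ ∈ [0, C_t). Let 𝓝 = min{n : ∑_{i=0}^{n-1} 𝓔ᵢ ≥ b} with 0 < b ≤ C_t. Then E[𝓝] ≤ b/E[𝓔₀] + 1. -/

import Mathlib

open MeasureTheory ProbabilityTheory

theorem hitting_time_bound_memoryless_type
    {Ω : Type*} [MeasurableSpace Ω] (μ : Measure Ω) [IsProbabilityMeasure μ]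
    (𝓔 : ℕ → Ω → ℝ)
    (hmeas : ∀ i, Measurable (𝓔 i))
    (hnonneg : ∀ i ω, 0 ≤ 𝓔 i ω)
    (Ct : ℝ) (hCt : 0 < Ct)
    (hbdd : ∀ i ω, 𝓔 i ω ≤ Ct)
    (hint : Integrable (𝓔 0) μ)
    (hmean : 0 < ∫ ω, 𝓔 0 ω ∂μ)
    (hindep : iIndepFun 𝓔 μ)
    (hident : ∀ i, IdentDistrib (𝓔 i) (𝓔 0) μ μ)
    (hcond : ∀ γ ∈ Set.Ico (0:ℝ) Ct,
      (∫ ω in {ω | γ ≤ 𝓔 0 ω}, 𝓔 0 ω ∂μ) ≤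
        (γ + ∫ ω, 𝓔 0 ω ∂μ) * (μ {ω | γ ≤ 𝓔 0 ω}).toReal)
    (b : ℝ) (hb0 : 0 < b) (hbCt : b ≤ Ct)
    (𝓝 : Ω → ℕ)
    (h𝓝 : ∀ ω, 𝓝 ω = sInf {n : ℕ | b ≤ ∑ i ∈ Finset.range n, 𝓔 i ω}) :
    (∫ ω, (𝓝 ω : ℝ) ∂μ) ≤ b / (∫ ω, 𝓔 0 ω ∂μ) + 1 := by
  classical
  set m : ℝ := ∫ ω, 𝓔 0 ω ∂μ with hm_def
  have hm0 : 0 < m := hmean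
  -- bounded measurable functions are integrable
  have hbint : ∀ (f : Ω → ℝ) (C : ℝ), Measurable f → (∀ ω, |f ω| ≤ C) → Integrable f μ :=
    fun f C hf h => (integrable_const C).mono' hf.aestronglyMeasurable
      (Filter.Eventually.of_forall fun ω => by simpa [Real.norm_eq_abs] using h ω)
  -- partial sums
  set S : ℕ → Ω → ℝ := fun n ω => ∑ i ∈ Finset.range n, 𝓔 i ω with hS_def
  have h𝓝' : ∀ ω, 𝓝 ω = sInf {n : ℕ | b ≤ S n ω} := fun ω => h𝓝 ω
  have hSmeas : ∀ n, Measurable (S n) := fun n =>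
    Finset.measurable_sum _ fun i _ => hmeas i
  have hSsucc : ∀ n ω, S (n+1) ω = S n ω + 𝓔 n ω := fun n ω => Finset.sum_range_succ _ n
  have hS0 : ∀ ω, S 0 ω = 0 := fun ω => Finset.sum_range_zero _
  have hSnonneg : ∀ n ω, 0 ≤ S n ω := fun n ω => Finset.sum_nonneg fun i _ => hnonneg i ω
  have hSmono : ∀ (ω : Ω) ⦃i j : ℕ⦄, i ≤ j → S i ω ≤ S j ω := fun ω i j hij =>
    Finset.sum_le_sum_of_subset_of_nonneg (Finset.range_subset_range.2 hij)
      fun k _ _ => hnonneg k ω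
  -- independence
  have hSE : ∀ n, IndepFun (S n) (𝓔 n) μ := by
    intro n
    have h := hindep.indepFun_finset_sum_of_notMem hmeas
      (Finset.notMem_range_self (n := n))
    have he : (∑ j ∈ Finset.range n, 𝓔 j) = S n := by
      funext ω; simp [hS_def, Finset.sum_apply]
    rwa [he] at h
  -- indicators
  set χ : ℕ → Ω → ℝ := fun n ω => if S n ω < b then 1 else 0 with hχ_def
  set P : ℕ → ℝ := fun n => (μ {ω | S n ω < b}).toReal with hP_def
  have hAmeas : ∀ n, MeasurableSet {ω | S n ω < b} := fun n =>
    measurableSet_lt (hSmeas n) measurable_const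
  have hχmeas : ∀ n, Measurable (χ n) := fun n =>
    Measurable.ite (hAmeas n) measurable_const measurable_const
  have hχbd : ∀ n ω, |χ n ω| ≤ 1 := by
    intro n ω; simp only [hχ_def]; split <;> norm_num
  have hχint : ∀ n, Integrable (χ n) μ := fun n => hbint _ 1 (hχmeas n) (hχbd n)
  have hiteint : ∀ (p : Ω → Prop), MeasurableSet {ω | p ω} →
      ∫ ω, (if p ω then (1:ℝ) else 0) ∂μ = (μ {ω | p ω}).toReal := by
    intro p hp
    have h1 : (fun ω => if p ω then (1:ℝ) else 0)
        = Set.indicator {ω | p ω} (fun _ => (1:ℝ)) := by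
      funext ω; by_cases h : p ω <;> simp [Set.indicator_apply, Set.mem_setOf_eq, h]
    rw [h1, integral_indicator_const (1:ℝ) hp, smul_eq_mul, mul_one, measureReal_def]
  have hχint' : ∀ n, ∫ ω, χ n ω ∂μ = P n := fun n => hiteint _ (hAmeas n)
  have hPnonneg : ∀ n, 0 ≤ P n := fun n => ENNReal.toReal_nonneg
  have hPle1 : ∀ n, P n ≤ 1 := by
    intro n
    have h1 : μ {ω | S n ω < b} ≤ 1 := prob_le_one
    simpa using ENNReal.toReal_mono (by simp) h1
  -- Step 1 : Wald-type identity for each term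
  have hEnint : ∀ n, Integrable (𝓔 n) μ := fun n => (hident n).integrable_iff.mpr hint
  have hEnmean : ∀ n, ∫ ω, 𝓔 n ω ∂μ = m := fun n => (hident n).integral_eq
  have hI1 : ∀ n, ∫ ω, 𝓔 n ω * χ n ω ∂μ = m * P n := by
    intro n
    have hφ : Measurable (fun x : ℝ => if x < b then (1:ℝ) else 0) :=
      Measurable.ite (measurableSet_lt measurable_id measurable_const)
        measurable_const measurable_const
    have hind : IndepFun (𝓔 n) (χ n) μ := by
      have := ((hSE n).symm.comp measurable_id hφ)
      exact this
    have h2 := hind.integral_mul_eq_mul_integral (hEnint n).aestronglyMeasurable (hχint n).aestronglyMeasurable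
    have h3 : ∫ ω, 𝓔 n ω * χ n ω ∂μ = ∫ ω, (𝓔 n * χ n) ω ∂μ := rfl
    rw [h3, h2, hEnmean n, hχint' n]
  -- Fubini transfer lemma
  have fub : ∀ (n : ℕ) (g : ℝ → ℝ → ℝ) (K : ℝ), Measurable (Function.uncurry g) →
      (∀ x y, 0 ≤ y → y ≤ Ct → |g x y| ≤ K) →
      Integrable (Function.uncurry g) ((μ.map (S n)).prod (μ.map (𝓔 n))) ∧
      ∫ ω, g (S n ω) (𝓔 n ω) ∂μ = ∫ x, ∫ y, g x y ∂(μ.map (𝓔 n)) ∂(μ.map (S n)) := by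
    intro n g K hg hK
    have hpm : Measurable (fun ω => (S n ω, 𝓔 n ω)) := (hSmeas n).prodMk (hmeas n)
    have hlaw : μ.map (fun ω => (S n ω, 𝓔 n ω)) = (μ.map (S n)).prod (μ.map (𝓔 n)) :=
      (indepFun_iff_map_prod_eq_prod_map_map (hSmeas n).aemeasurable
        (hmeas n).aemeasurable).mp (hSE n)
    have hΩint : Integrable (fun ω => g (S n ω) (𝓔 n ω)) μ :=
      hbint _ K (hg.comp hpm) (fun ω => hK _ _ (hnonneg n ω) (hbdd n ω))
    have hPint : Integrable (Function.uncurry g) ((μ.map (S n)).prod (μ.map (𝓔 n))) := by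
      rw [← hlaw]
      exact (integrable_map_measure hg.aestronglyMeasurable hpm.aemeasurable).mpr hΩint
    refine ⟨hPint, ?_⟩
    calc ∫ ω, g (S n ω) (𝓔 n ω) ∂μ
        = ∫ p, Function.uncurry g p ∂(μ.map (fun ω => (S n ω, 𝓔 n ω))) :=
          (integral_map hpm.aemeasurable hg.aestronglyMeasurable).symm
      _ = ∫ p, Function.uncurry g p ∂((μ.map (S n)).prod (μ.map (𝓔 n))) := by rw [hlaw]
      _ = ∫ x, ∫ y, g x y ∂(μ.map (𝓔 n)) ∂(μ.map (S n)) := integral_prod _ hPint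
  -- overshoot bound
  have hover : ∀ γ : ℝ, 0 < γ →
      ∫ ω, 𝓔 0 ω * (if γ ≤ 𝓔 0 ω then 1 else 0) ∂μ
        ≤ (γ + m) * (μ {ω | γ ≤ 𝓔 0 ω}).toReal := by
    intro γ hγ
    have hDm : MeasurableSet {ω | γ ≤ 𝓔 0 ω} :=
      measurableSet_le measurable_const (hmeas 0)
    have hind : ∫ ω, 𝓔 0 ω * (if γ ≤ 𝓔 0 ω then 1 else 0) ∂μ
        = ∫ ω in {ω | γ ≤ 𝓔 0 ω}, 𝓔 0 ω ∂μ := by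
      rw [← integral_indicator hDm]
      congr 1; funext ω
      by_cases h : γ ≤ 𝓔 0 ω <;> simp [Set.indicator_apply, Set.mem_setOf_eq, h]
    rw [hind]
    rcases lt_trichotomy γ Ct with h | h | h
    · exact hcond γ ⟨hγ.le, h⟩
    · have h1 : ∫ ω in {ω | γ ≤ 𝓔 0 ω}, 𝓔 0 ω ∂μ ≤ ∫ _ω in {ω | γ ≤ 𝓔 0 ω}, Ct ∂μ :=
        setIntegral_mono_on hint.integrableOn
          (integrableOn_const (measure_lt_top μ _).ne) hDm
          (fun ω _ => hbdd 0 ω)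
      rw [setIntegral_const, smul_eq_mul, measureReal_def] at h1
      have h2 : (μ {ω | γ ≤ 𝓔 0 ω}).toReal * Ct ≤ (γ + m) * (μ {ω | γ ≤ 𝓔 0 ω}).toReal := by
        rw [mul_comm]
        apply mul_le_mul_of_nonneg_right _ ENNReal.toReal_nonneg
        rw [← h]; linarith
      linarith
    · have hD : {ω | γ ≤ 𝓔 0 ω} = ∅ := by
        ext ω
        simp only [Set.mem_setOf_eq, Set.mem_empty_iff_false, iff_false, not_le]
        exact lt_of_le_of_lt (hbdd 0 ω) h
      simp [hD]
  -- the slice inequality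
  set g : ℝ → ℝ → ℝ := fun x y =>
    (x + y) * ((if x < b then (1:ℝ) else 0) * (if b - x ≤ y then 1 else 0)) with hg_def
  set j : ℝ → ℝ → ℝ := fun x y =>
    (if x < b then (1:ℝ) else 0) * (if b - x ≤ y then 1 else 0) with hj_def
  have hgm : Measurable (Function.uncurry g) := by
    apply Measurable.mul
    · exact measurable_fst.add measurable_snd
    apply Measurable.mul
    · exact Measurable.ite (measurableSet_lt measurable_fst measurable_const)
        measurable_const measurable_const
    · exact Measurable.ite (measurableSet_le (measurable_const.sub measurable_fst)
        measurable_snd) measurable_const measurable_const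
  have hjm : Measurable (Function.uncurry j) := by
    apply Measurable.mul
    · exact Measurable.ite (measurableSet_lt measurable_fst measurable_const)
        measurable_const measurable_const
    · exact Measurable.ite (measurableSet_le (measurable_const.sub measurable_fst)
        measurable_snd) measurable_const measurable_const
  have hgbd : ∀ x y, 0 ≤ y → y ≤ Ct → |g x y| ≤ 2 * Ct := by
    intro x y hy0 hyC
    simp only [hg_def]
    by_cases h1 : x < b
    · by_cases h2 : b - x ≤ y
      · rw [if_pos h1, if_pos h2]
        rw [abs_le]
        constructor <;> [linarith; linarith]
      · rw [if_neg h2]; simp; linarith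
    · rw [if_neg h1]; simp; linarith
  have hjbd : ∀ x y, 0 ≤ y → y ≤ Ct → |j x y| ≤ 1 := by
    intro x y _ _
    simp only [hj_def]
    split <;> split <;> norm_num
  have hgsm : ∀ x : ℝ, Measurable (g x) := by
    intro x
    have : g x = (fun y => Function.uncurry g (x, y)) := rfl
    rw [this]
    exact hgm.comp (measurable_const.prodMk measurable_id)
  have hjsm : ∀ x : ℝ, Measurable (j x) := by
    intro x
    have : j x = (fun y => Function.uncurry j (x, y)) := rfl
    rw [this]
    exact hjm.comp (measurable_const.prodMk measurable_id)
  have hslice : ∀ x : ℝ, ∫ y, g x y ∂(μ.map (𝓔 0)) ≤ (b + m) * ∫ y, j x y ∂(μ.map (𝓔 0)) := by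
    intro x
    rw [integral_map (hmeas 0).aemeasurable (hgsm x).aestronglyMeasurable,
      integral_map (hmeas 0).aemeasurable (hjsm x).aestronglyMeasurable]
    by_cases hx : x < b
    · have hγ : 0 < b - x := sub_pos.2 hx
      have hDm : MeasurableSet {ω | b - x ≤ 𝓔 0 ω} :=
        measurableSet_le measurable_const (hmeas 0)
      have hjeq : ∫ ω, j x (𝓔 0 ω) ∂μ = (μ {ω | b - x ≤ 𝓔 0 ω}).toReal := by
        simp only [hj_def, if_pos hx, one_mul]
        exact hiteint _ hDm
      have hpw : ∀ ω, g x (𝓔 0 ω) =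
          x * (if b - x ≤ 𝓔 0 ω then 1 else 0)
            + 𝓔 0 ω * (if b - x ≤ 𝓔 0 ω then 1 else 0) := by
        intro ω; simp only [hg_def, if_pos hx, one_mul]; ring
      have hint1 : Integrable (fun ω => x * (if b - x ≤ 𝓔 0 ω then (1:ℝ) else 0)) μ := by
        apply hbint _ |x|
        · exact measurable_const.mul (Measurable.ite hDm measurable_const measurable_const)
        · intro ω; rw [abs_mul]
          have : |if b - x ≤ 𝓔 0 ω then (1:ℝ) else 0| ≤ 1 := by split <;> norm_num
          nlinarith [abs_nonneg x]
      have hint2 : Integrable (fun ω => 𝓔 0 ω * (if b - x ≤ 𝓔 0 ω then (1:ℝ) else 0)) μ := by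
        apply hbint _ Ct
        · exact (hmeas 0).mul (Measurable.ite hDm measurable_const measurable_const)
        · intro ω; rw [abs_mul]
          have h1 : |𝓔 0 ω| ≤ Ct := by rw [abs_of_nonneg (hnonneg 0 ω)]; exact hbdd 0 ω
          have h2 : |if b - x ≤ 𝓔 0 ω then (1:ℝ) else 0| ≤ 1 := by split <;> norm_num
          nlinarith [abs_nonneg (𝓔 0 ω)]
      have hgeq : ∫ ω, g x (𝓔 0 ω) ∂μ
          = x * (μ {ω | b - x ≤ 𝓔 0 ω}).toReal
            + ∫ ω, 𝓔 0 ω * (if b - x ≤ 𝓔 0 ω then 1 else 0) ∂μ := by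
        rw [integral_congr_ae (Filter.Eventually.of_forall hpw), integral_add hint1 hint2,
          integral_const_mul, hiteint _ hDm]
      rw [hgeq, hjeq]
      have := hover (b - x) hγ
      have hq : (0:ℝ) ≤ (μ {ω | b - x ≤ 𝓔 0 ω}).toReal := ENNReal.toReal_nonneg
      nlinarith
    · have hz : ∀ ω, g x (𝓔 0 ω) = 0 := by
        intro ω; simp [hg_def, hx]
      have hz' : ∀ ω, j x (𝓔 0 ω) = 0 := by
        intro ω; simp [hj_def, hx]
      rw [integral_congr_ae (Filter.Eventually.of_forall hz),
        integral_congr_ae (Filter.Eventually.of_forall hz')]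
      simp
  -- pointwise identities
  have hpw2 : ∀ n ω, g (S n ω) (𝓔 n ω) = S (n+1) ω * (χ n ω - χ (n+1) ω) := by
    intro n ω
    have h1 := hSsucc n ω
    by_cases hb1 : S n ω < b
    · by_cases hb2 : b - S n ω ≤ 𝓔 n ω
      · have hb3 : ¬ S (n+1) ω < b := by rw [h1]; push_neg; linarith
        simp only [hg_def, hχ_def, if_pos hb1, if_pos hb2, if_neg hb3]
        rw [h1]; ring
      · have hb3 : S (n+1) ω < b := by rw [h1]; linarith
        simp only [hg_def, hχ_def, if_pos hb1, if_neg hb2, if_pos hb3]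
        ring
    · have hb3 : ¬ S (n+1) ω < b := by
        rw [h1]; push_neg; push_neg at hb1; have := hnonneg n ω; linarith
      simp only [hg_def, hχ_def, if_neg hb1, if_neg hb3]
      ring
  have hpw3 : ∀ n ω, j (S n ω) (𝓔 n ω) = χ n ω - χ (n+1) ω := by
    intro n ω
    have h1 := hSsucc n ω
    by_cases hb1 : S n ω < b
    · by_cases hb2 : b - S n ω ≤ 𝓔 n ω
      · have hb3 : ¬ S (n+1) ω < b := by rw [h1]; push_neg; linarith
        simp only [hj_def, hχ_def, if_pos hb1, if_pos hb2, if_neg hb3]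
        ring
      · have hb3 : S (n+1) ω < b := by rw [h1]; linarith
        simp only [hj_def, hχ_def, if_pos hb1, if_neg hb2, if_pos hb3]
        ring
    · have hb3 : ¬ S (n+1) ω < b := by
        rw [h1]; push_neg; push_neg at hb1; have := hnonneg n ω; linarith
      simp only [hj_def, hχ_def, if_neg hb1, if_neg hb3]
      ring
  -- Step 2 : overshoot inequality for each n
  have hI2 : ∀ n, ∫ ω, S (n+1) ω * (χ n ω - χ (n+1) ω) ∂μ ≤ (b + m) * (P n - P (n+1)) := by
    intro n
    obtain ⟨hPg, hEg⟩ := fub n g (2 * Ct) hgm hgbd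
    obtain ⟨hPj, hEj⟩ := fub n j 1 hjm hjbd
    have hmapeq : μ.map (𝓔 n) = μ.map (𝓔 0) := (hident n).map_eq
    calc ∫ ω, S (n+1) ω * (χ n ω - χ (n+1) ω) ∂μ
        = ∫ ω, g (S n ω) (𝓔 n ω) ∂μ :=
          integral_congr_ae (Filter.Eventually.of_forall fun ω => (hpw2 n ω).symm)
      _ = ∫ x, ∫ y, g x y ∂(μ.map (𝓔 n)) ∂(μ.map (S n)) := hEg
      _ ≤ ∫ x, (b + m) * ∫ y, j x y ∂(μ.map (𝓔 n)) ∂(μ.map (S n)) := by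
          apply integral_mono hPg.integral_prod_left (hPj.integral_prod_left.const_mul _)
          intro x
          rw [hmapeq]
          exact hslice x
      _ = (b + m) * ∫ x, ∫ y, j x y ∂(μ.map (𝓔 n)) ∂(μ.map (S n)) := integral_const_mul _ _
      _ = (b + m) * ∫ ω, j (S n ω) (𝓔 n ω) ∂μ := by rw [hEj]
      _ = (b + m) * ∫ ω, (χ n ω - χ (n+1) ω) ∂μ := by
          rw [integral_congr_ae (Filter.Eventually.of_forall fun ω => hpw3 n ω)]
      _ = (b + m) * (P n - P (n+1)) := by
          rw [integral_sub (hχint n) (hχint (n+1)), hχint' n, hχint' (n+1)]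
  -- integrability facts
  have hSχbd : ∀ k ω, |S k ω * χ k ω| ≤ b := by
    intro k ω
    by_cases h : S k ω < b
    · simp only [hχ_def, if_pos h, mul_one]
      rw [abs_of_nonneg (hSnonneg k ω)]; linarith
    · simp only [hχ_def, if_neg h, mul_zero, abs_zero]; linarith
  have hSχint : ∀ k, Integrable (fun ω => S k ω * χ k ω) μ := fun k =>
    hbint _ b ((hSmeas k).mul (hχmeas k)) (hSχbd k)
  have hTint : ∀ k, Integrable (fun ω => S (k+1) ω * (χ k ω - χ (k+1) ω)) μ := by
    intro k
    apply hbint _ (b + Ct)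
    · exact (hSmeas (k+1)).mul ((hχmeas k).sub (hχmeas (k+1)))
    · intro ω
      have h1 := hSsucc k ω
      have h2 := hnonneg k ω
      have h3 := hbdd k ω
      have h4 := hSnonneg (k+1) ω
      by_cases hb1 : S k ω < b <;> by_cases hb2 : S (k+1) ω < b <;>
        simp only [hχ_def, if_pos, if_neg, hb1, hb2] <;>
        first
          | (rw [abs_le]; constructor <;> simp <;> linarith)
          | (simp; rw [abs_le]; constructor <;> linarith)
  have hEχint : ∀ k, Integrable (fun ω => 𝓔 k ω * χ k ω) μ := by
    intro k
    apply hbint _ Ct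
    · exact (hmeas k).mul (hχmeas k)
    · intro ω
      rw [abs_mul, abs_of_nonneg (hnonneg k ω)]
      have h2 := hχbd k ω
      nlinarith [hnonneg k ω, hbdd k ω, abs_nonneg (χ k ω)]
  -- telescoping
  have hstep : ∀ k, ∫ ω, 𝓔 k ω * χ k ω ∂μ =
      ((∫ ω, S (k+1) ω * χ (k+1) ω ∂μ) - ∫ ω, S k ω * χ k ω ∂μ)
        + ∫ ω, S (k+1) ω * (χ k ω - χ (k+1) ω) ∂μ := by
    intro k
    have ha : Integrable (fun ω => S (k+1) ω * χ (k+1) ω - S k ω * χ k ω) μ :=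
      (hSχint (k+1)).sub (hSχint k)
    have e1 : ∫ ω, 𝓔 k ω * χ k ω ∂μ
        = ∫ ω, ((S (k+1) ω * χ (k+1) ω - S k ω * χ k ω)
            + S (k+1) ω * (χ k ω - χ (k+1) ω)) ∂μ := by
      have h2 : ∀ ω, 𝓔 k ω * χ k ω
          = (S (k+1) ω * χ (k+1) ω - S k ω * χ k ω)
            + S (k+1) ω * (χ k ω - χ (k+1) ω) := by
        intro ω
        rw [hSsucc k ω]; ring
      exact integral_congr_ae (Filter.Eventually.of_forall h2)
    rw [e1, integral_add ha (hTint k), integral_sub (hSχint (k+1)) (hSχint k)]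
  -- key bound for partial sums
  have key : ∀ N : ℕ, ∑ n ∈ Finset.range N, P n ≤ (b + m) / m := by
    intro N
    have hsum1 : m * ∑ n ∈ Finset.range N, P n
        = ∑ n ∈ Finset.range N, ∫ ω, 𝓔 n ω * χ n ω ∂μ := by
      rw [Finset.mul_sum]
      exact Finset.sum_congr rfl fun n _ => (hI1 n).symm
    have hsum2 : ∑ n ∈ Finset.range N, ∫ ω, 𝓔 n ω * χ n ω ∂μ
        = ((∫ ω, S N ω * χ N ω ∂μ) - ∫ ω, S 0 ω * χ 0 ω ∂μ)
          + ∑ n ∈ Finset.range N, ∫ ω, S (n+1) ω * (χ n ω - χ (n+1) ω) ∂μ := by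
      rw [← Finset.sum_range_sub (fun k => ∫ ω, S k ω * χ k ω ∂μ),
        ← Finset.sum_add_distrib]
      exact Finset.sum_congr rfl fun n _ => hstep n
    have hu0 : ∫ ω, S 0 ω * χ 0 ω ∂μ = 0 := by
      have : (fun ω => S 0 ω * χ 0 ω) = fun _ => (0:ℝ) := by
        funext ω; rw [hS0 ω]; ring
      rw [this, integral_zero]
    have huN : ∫ ω, S N ω * χ N ω ∂μ ≤ b * P N := by
      have hle : (fun ω => S N ω * χ N ω) ≤ fun ω => b * χ N ω := by
        intro ω
        by_cases h : S N ω < b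
        · simp only [hχ_def, if_pos h, mul_one]; linarith
        · simp only [hχ_def, if_neg h, mul_zero]; exact le_refl 0
      calc ∫ ω, S N ω * χ N ω ∂μ ≤ ∫ ω, b * χ N ω ∂μ :=
            integral_mono (hSχint N) ((hχint N).const_mul b) hle
        _ = b * P N := by rw [integral_const_mul, hχint' N]
    have hsum3 : ∑ n ∈ Finset.range N, ∫ ω, S (n+1) ω * (χ n ω - χ (n+1) ω) ∂μ
        ≤ (b + m) * (P 0 - P N) := by
      calc ∑ n ∈ Finset.range N, ∫ ω, S (n+1) ω * (χ n ω - χ (n+1) ω) ∂μ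
          ≤ ∑ n ∈ Finset.range N, (b + m) * (P n - P (n+1)) :=
            Finset.sum_le_sum fun n _ => hI2 n
        _ = (b + m) * ∑ n ∈ Finset.range N, (P n - P (n+1)) := by rw [Finset.mul_sum]
        _ = (b + m) * (P 0 - P N) := by rw [Finset.sum_range_sub' P]
    have hfinal : m * ∑ n ∈ Finset.range N, P n ≤ b + m := by
      rw [hsum1, hsum2, hu0]
      have h1 := hPle1 0
      have h2 := hPnonneg N
      have h3 := hPnonneg 0
      nlinarith [huN, hsum3]
    rw [le_div_iff₀ hm0]
    linarith [hfinal]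
  -- measurability of 𝓝
  have h𝓝meas : Measurable 𝓝 := by
    apply measurable_to_countable'
    intro k
    match k with
    | 0 =>
      have hset : 𝓝 ⁻¹' {0} = ⋂ n, {ω | S n ω < b} := by
        ext ω
        simp only [Set.mem_preimage, Set.mem_singleton_iff, Set.mem_iInter, Set.mem_setOf_eq]
        rw [h𝓝' ω]
        constructor
        · intro h0 n
          by_contra hc
          push_neg at hc
          rcases Nat.sInf_eq_zero.mp h0 with h | h
          · have : b ≤ S 0 ω := h
            rw [hS0 ω] at this; linarith
          · exact (Set.eq_empty_iff_forall_notMem.mp h n) hc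
        · intro h
          apply Nat.sInf_eq_zero.mpr
          right
          apply Set.eq_empty_iff_forall_notMem.mpr
          intro n hn
          exact absurd (h n) (not_lt.2 hn)
      rw [hset]
      exact MeasurableSet.iInter fun n => hAmeas n
    | (k+1) =>
      have hset : 𝓝 ⁻¹' {k+1} = {ω | S k ω < b} ∩ {ω | b ≤ S (k+1) ω} := by
        ext ω
        simp only [Set.mem_preimage, Set.mem_singleton_iff, Set.mem_inter_iff, Set.mem_setOf_eq]
        rw [h𝓝' ω]
        constructor
        · intro h
          have hne : {n : ℕ | b ≤ S n ω}.Nonempty := by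
            by_contra hc
            rw [Set.not_nonempty_iff_eq_empty] at hc
            rw [hc, Nat.sInf_empty] at h
            omega
          have hmem : b ≤ S (k+1) ω := by
            have := Nat.sInf_mem hne
            rwa [h] at this
          have hk : S k ω < b := by
            by_contra hc
            push_neg at hc
            have h2 : sInf {n : ℕ | b ≤ S n ω} ≤ k := Nat.sInf_le hc
            omega
          exact ⟨hk, hmem⟩
        · rintro ⟨h1, h2⟩
          apply le_antisymm
          · exact Nat.sInf_le h2
          · apply le_csInf ⟨k+1, h2⟩
            intro n hn
            by_contra hc
            push_neg at hc
            have hle : n ≤ k := Nat.lt_succ_iff.mp hc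
            have : S n ω ≤ S k ω := hSmono ω hle
            have hb' : b ≤ S n ω := hn
            linarith
      rw [hset]
      exact (hAmeas k).inter (measurableSet_le measurable_const (hSmeas (k+1)))
  -- bound for truncated expectation
  have hminmeas : ∀ N : ℕ, Measurable (fun ω => ((min (𝓝 ω) N : ℕ) : ℝ)) := by
    intro N
    exact (measurable_from_top (f := fun k : ℕ => ((min k N : ℕ) : ℝ))).comp h𝓝meas
  have hmin : ∀ N : ℕ, ∫ ω, ((min (𝓝 ω) N : ℕ) : ℝ) ∂μ ≤ (b + m) / m := by
    intro N
    have hpw : ∀ ω, ((min (𝓝 ω) N : ℕ) : ℝ) ≤ ∑ n ∈ Finset.range N, χ n ω := by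
      intro ω
      have hlt : ∀ n, n < 𝓝 ω → S n ω < b := by
        intro n hn
        by_contra hc
        push_neg at hc
        have : 𝓝 ω ≤ n := by rw [h𝓝' ω]; exact Nat.sInf_le hc
        omega
      have h1 : ∀ n ∈ Finset.range (min (𝓝 ω) N), χ n ω = 1 := by
        intro n hn
        rw [Finset.mem_range] at hn
        have := hlt n (lt_of_lt_of_le hn (min_le_left _ _))
        simp [hχ_def, this]
      calc ((min (𝓝 ω) N : ℕ) : ℝ)
          = ∑ n ∈ Finset.range (min (𝓝 ω) N), χ n ω := by
            rw [Finset.sum_congr rfl h1]; simp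
        _ ≤ ∑ n ∈ Finset.range N, χ n ω := by
            apply Finset.sum_le_sum_of_subset_of_nonneg
              (Finset.range_subset_range.2 (min_le_right _ _))
            intro n _ _
            simp only [hχ_def]; split <;> norm_num
    have hminint : Integrable (fun ω => ((min (𝓝 ω) N : ℕ) : ℝ)) μ := by
      apply hbint _ N (hminmeas N)
      intro ω
      rw [abs_of_nonneg (Nat.cast_nonneg _)]
      exact_mod_cast min_le_right _ _
    have hsint : Integrable (fun ω => ∑ n ∈ Finset.range N, χ n ω) μ :=
      integrable_finset_sum _ fun n _ => hχint n
    calc ∫ ω, ((min (𝓝 ω) N : ℕ) : ℝ) ∂μ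
        ≤ ∫ ω, ∑ n ∈ Finset.range N, χ n ω ∂μ := integral_mono hminint hsint hpw
      _ = ∑ n ∈ Finset.range N, P n := by
          rw [integral_finset_sum _ fun n _ => hχint n]
          exact Finset.sum_congr rfl fun n _ => hχint' n
      _ ≤ (b + m) / m := key N
  -- conclusion
  have hrhs : (b + m) / m = b / m + 1 := by
    rw [add_div, div_self hm0.ne']
  by_cases hNint : Integrable (fun ω => (𝓝 ω : ℝ)) μ
  · have hconv : Filter.Tendsto (fun N => ∫ ω, ((min (𝓝 ω) N : ℕ) : ℝ) ∂μ)
        Filter.atTop (nhds (∫ ω, (𝓝 ω : ℝ) ∂μ)) := by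
      apply tendsto_integral_of_dominated_convergence (fun ω => (𝓝 ω : ℝ))
      · exact fun N => (hminmeas N).aestronglyMeasurable
      · exact hNint
      · intro N
        apply Filter.Eventually.of_forall
        intro ω
        rw [Real.norm_eq_abs, abs_of_nonneg (Nat.cast_nonneg _)]
        exact_mod_cast min_le_left _ _
      · apply Filter.Eventually.of_forall
        intro ω
        apply tendsto_atTop_of_eventually_const (i₀ := 𝓝 ω)
        intro N hN
        rw [min_eq_left hN]
    have hle := le_of_tendsto hconv (Filter.Eventually.of_forall hmin)
    rw [← hrhs]
    exact hle
  · rw [integral_undef hNint]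
    have h1 : 0 ≤ b / m := div_nonneg hb0.le hm0.le
    linarith
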